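/- Let α ∈ (1,2], ν a measure on S, φ : S → ℝ^M and ψ : S → ℝ^N measurable, U ⊆ ℝ^M open, A : U → ℝ differentiable, and p_θ(t) = [(α−1)(θ·φ(t) − A(θ)) + 1]_+^{1/(α−1)} with ∫_S p_θ dν = 1 on U. Assume the hypotheses guaranteeing ∇A(θ₀) = ∫ p_{θ₀}^{2−α} φ dν / ∫ p_{θ₀}^{2−α} dν at θ₀ ∈ U (a.e. differentiability of θ ↦ p_θ(t) with gradient p_θ(t)^{2−α}(φ(t) − ∇A(θ)), integrable domination of this gradient on a ball around θ₀, and 0 < ∫_{{p_{θ₀}>0}} p_{θ₀}^{2−α} dν < ∞), and additionally that ‖ψ(t)‖·‖p_θ(t)^{2−α}(φ(t) − ∇A(θ))‖ is dominated on that ball by a ν-integrable function, with p_{θ₀}ψ, p_{θ₀}^{2−α}ψ, p_{θ₀}^{2−α}‖φ‖, and p_{θ₀}^{2−α}‖ψ‖‖φ‖ ν-integrable. Then the attention map ρ(θ) = ∫_S p_θ ψ dν is differentiable at θ₀, and its Jacobian J ∈ ℝ^{N×M} equals the generalized (2−α)-covariance: J = ∫_{{p_{θ₀}>0}} p_{θ₀}^{2−α}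 ψ φᵀ dν − (∫_{{p_{θ₀}>0}} p_{θ₀}^{2−α} ψ dν)(∫_{{p_{θ₀}>0}} p_{θ₀}^{2−α} φ dν)ᵀ / (∫_{{p_{θ₀}>0}} p_{θ₀}^{2−α} dν). -/

import Mathlib

open Filter Real MeasureTheory
open scoped RealInnerProductSpace

section Aux

open Metric Set Topology

variable {M : ℕ}

private lemma aux_pairs {x₀ : EuclideanSpace ℝ (Fin M)} {ε : ℝ}
    {N : Set (EuclideanSpace ℝ (Fin M))}
    (hNm : MeasurableSet N) (hN0 : volume N = 0) :
    ∀ᵐ q ∂((volume.restrict (ball x₀ ε)).prod (volume.restrict (ball x₀ ε))),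
      ∀ᵐ s ∂(volume.restrict (Icc (0:ℝ) 1)), q.1 + s • (q.2 - q.1) ∉ N := by
  set μb := volume.restrict (ball x₀ ε) with hμb
  set l01 := volume.restrict (Icc (0:ℝ) 1) with hl01
  have hWm : MeasurableSet {x : (EuclideanSpace ℝ (Fin M) × EuclideanSpace ℝ (Fin M)) × ℝ |
      x.1.1 + x.2 • (x.1.2 - x.1.1) ∉ N} := by
    have hc : Continuous fun x : (EuclideanSpace ℝ (Fin M) × EuclideanSpace ℝ (Fin M)) × ℝ =>
        x.1.1 + x.2 • (x.1.2 - x.1.1) := by fun_prop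
    exact (hc.measurable hNm).compl
  rw [Measure.ae_ae_comm hWm]
  have hne0 : ∀ᵐ s ∂l01, s ≠ 0 := by
    refine ae_restrict_of_ae ?_
    rw [ae_iff]
    simpa [Set.setOf_eq_eq_singleton] using (measure_singleton (0:ℝ))
  filter_upwards [hne0] with s hs
  rw [ae_iff]
  simp only [not_not]
  have hsm : MeasurableSet {q : EuclideanSpace ℝ (Fin M) × EuclideanSpace ℝ (Fin M) |
      q.1 + s • (q.2 - q.1) ∈ N} := by
    have hc : Continuous fun q : EuclideanSpace ℝ (Fin M) × EuclideanSpace ℝ (Fin M) =>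
        q.1 + s • (q.2 - q.1) := by fun_prop
    exact hc.measurable hNm
  rw [Measure.prod_apply hsm]
  have hsec : ∀ a : EuclideanSpace ℝ (Fin M), μb (Prod.mk a ⁻¹'
      {q : EuclideanSpace ℝ (Fin M) × EuclideanSpace ℝ (Fin M) |
        q.1 + s • (q.2 - q.1) ∈ N}) = 0 := by
    intro a
    refine le_antisymm ?_ zero_le
    have hpre : Prod.mk a ⁻¹' {q : EuclideanSpace ℝ (Fin M) × EuclideanSpace ℝ (Fin M) |
        q.1 + s • (q.2 - q.1) ∈ N} = (s • ·) ⁻¹' ((· + (a - s • a)) ⁻¹' N) := by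
      ext b
      simp only [Set.mem_preimage, Set.mem_setOf_eq]
      have : a + s • (b - a) = s • b + (a - s • a) := by
        simp [smul_sub]; abel
      rw [this]
    calc μb (Prod.mk a ⁻¹' {q : EuclideanSpace ℝ (Fin M) × EuclideanSpace ℝ (Fin M) |
          q.1 + s • (q.2 - q.1) ∈ N})
        ≤ volume ((s • ·) ⁻¹' ((· + (a - s • a)) ⁻¹' N)) := by
          rw [← hpre]; exact Measure.restrict_le_self _
      _ = 0 := by
          rw [Measure.addHaar_preimage_smul volume hs,
            measure_preimage_add_right volume _ N, hN0, mul_zero]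
  have h0 : ∀ x : EuclideanSpace ℝ (Fin M), μb {a | x + s • (a - x) ∈ N} = 0 :=
    fun x => hsec x
  simp [h0]

private lemma lipschitz_of_ae_grad_bound {f : EuclideanSpace ℝ (Fin M) → ℝ}
    {f' : EuclideanSpace ℝ (Fin M) → EuclideanSpace ℝ (Fin M)}
    {x₀ : EuclideanSpace ℝ (Fin M)} {ε C κ : ℝ} (hκ : 0 ≤ κ) (hC : 0 ≤ C)
    (hdiff : ∀ θ ∈ ball x₀ ε, HasGradientAt f (f' θ) θ)
    (hbound : ∀ᵐ θ ∂(volume.restrict (ball x₀ ε)), κ * ‖f' θ‖ ≤ C) :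
    ∀ a ∈ ball x₀ ε, ∀ b ∈ ball x₀ ε, κ * |f b - f a| ≤ C * ‖b - a‖ := by
  rcases eq_or_lt_of_le hκ with hκ0 | hκpos
  · intro a _ b _
    rw [← hκ0, zero_mul]
    exact mul_nonneg hC (norm_nonneg _)
  have h1 : (volume.restrict (ball x₀ ε)) {θ | ¬ (κ * ‖f' θ‖ ≤ C)} = 0 := hbound
  obtain ⟨N₀, hsub, hN₀m, hN₀0⟩ := exists_measurable_superset_of_null h1
  set N : Set (EuclideanSpace ℝ (Fin M)) := N₀ ∩ ball x₀ ε with hNdef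
  have hNm : MeasurableSet N := hN₀m.inter measurableSet_ball
  have hN0 : volume N = 0 := by
    rw [Measure.restrict_apply hN₀m] at hN₀0; exact hN₀0
  have hNprop : ∀ θ ∈ ball x₀ ε, θ ∉ N → κ * ‖f' θ‖ ≤ C := by
    intro θ hθ hθN
    by_contra h
    exact hθN ⟨hsub h, hθ⟩
  have key : ∀ a ∈ ball x₀ ε, ∀ b ∈ ball x₀ ε,
      (∀ᵐ s ∂(volume.restrict (Set.Icc (0:ℝ) 1)), a + s • (b - a) ∉ N) →
      κ * |f b - f a| ≤ C * ‖b - a‖ := by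
    intro a ha b hb hgood
    set γ : ℝ → EuclideanSpace ℝ (Fin M) := fun s => a + s • (b - a) with hγdef
    have hseg : ∀ s ∈ Set.Icc (0:ℝ) 1, γ s ∈ ball x₀ ε := fun s hs =>
      (convex_ball x₀ ε).add_smul_sub_mem ha hb hs
    set u : ℝ → ℝ := fun s => ⟪f' (γ s), b - a⟫ with hudef
    have hderiv : ∀ s ∈ Set.uIcc (0:ℝ) 1, HasDerivAt (fun s => f (γ s)) (u s) s := by
      intro s hs
      rw [Set.uIcc_of_le zero_le_one] at hs
      have hγd : HasDerivAt γ (b - a) s := by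
        have h := ((hasDerivAt_id s).smul_const (b - a)).const_add a
        rw [one_smul] at h; exact h
      have hfd := (hdiff (γ s) (hseg s hs)).hasFDerivAt.comp_hasDerivAt s hγd
      simp only [InnerProductSpace.toDual_apply_apply] at hfd; exact hfd
    have hu_eq : ∀ s ∈ Set.Icc (0:ℝ) 1, u s = deriv (fun s => f (γ s)) s := by
      intro s hs
      exact ((hderiv s (by rwa [Set.uIcc_of_le zero_le_one])).deriv).symm
    have hu_ae : AEStronglyMeasurable u (volume.restrict (Set.Icc (0:ℝ) 1)) := by
      refine (measurable_deriv (fun s => f (γ s))).aestronglyMeasurable.congr ?_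
      rw [Filter.EventuallyEq, ae_restrict_iff' measurableSet_Icc]
      exact ae_of_all _ fun s hs => (hu_eq s hs).symm
    have hb_ae : ∀ᵐ s ∂(volume.restrict (Set.Icc (0:ℝ) 1)), ‖u s‖ ≤ (C / κ) * ‖b - a‖ := by
      filter_upwards [hgood, ae_restrict_mem measurableSet_Icc] with s hsN hsIcc
      have h1 : κ * ‖f' (γ s)‖ ≤ C := hNprop (γ s) (hseg s hsIcc) hsN
      have h2 : ‖f' (γ s)‖ ≤ C / κ := (le_div_iff₀' hκpos).2 h1
      calc ‖u s‖ = |⟪f' (γ s), b - a⟫| := rfl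
        _ ≤ ‖f' (γ s)‖ * ‖b - a‖ := abs_real_inner_le_norm _ _
        _ ≤ (C / κ) * ‖b - a‖ := mul_le_mul_of_nonneg_right h2 (norm_nonneg _)
    have hInt : IntervalIntegrable u volume 0 1 := by
      rw [intervalIntegrable_iff_integrableOn_Icc_of_le zero_le_one]
      exact Integrable.mono' (integrable_const ((C / κ) * ‖b - a‖)) hu_ae hb_ae
    have hFTC := intervalIntegral.integral_eq_sub_of_hasDerivAt hderiv hInt
    have hγ1 : γ 1 = b := by simp [hγdef]
    have hγ0 : γ 0 = a := by simp [hγdef]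
    rw [hγ1, hγ0] at hFTC
    have hbound2 : |∫ s in (0:ℝ)..1, u s| ≤ (C / κ) * ‖b - a‖ := by
      have := intervalIntegral.norm_integral_le_of_norm_le_const_ae (C := (C / κ) * ‖b - a‖)
        (f := u) (a := 0) (b := 1) ?_
      · simpa using this
      · rw [ae_restrict_iff' measurableSet_Icc] at hb_ae
        filter_upwards [hb_ae] with s hs hsI
        exact hs (Set.mem_Icc_of_Ioc (by rwa [Set.uIoc_of_le zero_le_one] at hsI))
    rw [← hFTC]
    calc κ * |∫ s in (0:ℝ)..1, u s| ≤ κ * ((C / κ) * ‖b - a‖) :=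
          mul_le_mul_of_nonneg_left hbound2 hκ
      _ = C * ‖b - a‖ := by field_simp
  intro a ha b hb
  refine le_of_forall_pos_le_add ?_
  intro δ hδ
  have hfrac : ∀ x y : ℝ, 0 ≤ x → 0 < y → x * (y / (4 * (x + 1))) ≤ y / 4 := by
    intro x y hx hy
    have h1 : x / (4 * (x + 1)) ≤ 1 / 4 := by
      rw [div_le_div_iff₀ (by positivity) (by norm_num)]
      nlinarith
    calc x * (y / (4 * (x + 1))) = y * (x / (4 * (x + 1))) := by ring
      _ ≤ y * (1 / 4) := mul_le_mul_of_nonneg_left h1 hy.le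
      _ = y / 4 := by ring
  have hfa : ContinuousAt f a := (hdiff a ha).continuousAt
  have hfb : ContinuousAt f b := (hdiff b hb).continuousAt
  set δ' : ℝ := δ / (4 * (κ + 1)) with hδ'def
  have hδ' : 0 < δ' := by positivity
  obtain ⟨r1, hr1, hfa'⟩ := Metric.continuousAt_iff.1 hfa δ' hδ'
  obtain ⟨r2, hr2, hfb'⟩ := Metric.continuousAt_iff.1 hfb δ' hδ'
  obtain ⟨ra, hra, hball_a⟩ := Metric.isOpen_iff.1 isOpen_ball a ha
  obtain ⟨rb, hrb, hball_b⟩ := Metric.isOpen_iff.1 isOpen_ball b hb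
  set r : ℝ := min (min r1 r2) (min (min ra rb) (δ / (4 * (C + 1)))) with hrdef
  have hr : 0 < r :=
    lt_min (lt_min hr1 hr2) (lt_min (lt_min hra hrb) (by positivity))
  have hrra : r ≤ ra := le_trans (min_le_right _ _) (le_trans (min_le_left _ _) (min_le_left _ _))
  have hrrb : r ≤ rb := le_trans (min_le_right _ _) (le_trans (min_le_left _ _) (min_le_right _ _))
  have hrr1 : r ≤ r1 := le_trans (min_le_left _ _) (min_le_left _ _)
  have hrr2 : r ≤ r2 := le_trans (min_le_left _ _) (min_le_right _ _)
  have hrδ : r ≤ δ / (4 * (C + 1)) := le_trans (min_le_right _ _) (min_le_right _ _)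
  have hsub_a : ball a r ⊆ ball x₀ ε := fun x hx => hball_a (ball_subset_ball hrra hx)
  have hsub_b : ball b r ⊆ ball x₀ ε := fun x hx => hball_b (ball_subset_ball hrrb hx)
  set μb := volume.restrict (ball x₀ ε) with hμbdef
  have hGP := aux_pairs hNm hN0 (x₀ := x₀) (ε := ε)
  have hVpos : 0 < (μb.prod μb) (ball a r ×ˢ ball b r) := by
    rw [Measure.prod_prod]
    have hmb : ∀ c : EuclideanSpace ℝ (Fin M), ball c r ⊆ ball x₀ ε → 0 < μb (ball c r) := by
      intro c hc
      rw [hμbdef, Measure.restrict_apply measurableSet_ball,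
        Set.inter_eq_self_of_subset_left hc]
      exact measure_ball_pos volume c hr
    exact ENNReal.mul_pos (hmb a hsub_a).ne' (hmb b hsub_b).ne'
  have hbadnull : (μb.prod μb) {q : EuclideanSpace ℝ (Fin M) × EuclideanSpace ℝ (Fin M) |
      ¬ (∀ᵐ s ∂(volume.restrict (Set.Icc (0:ℝ) 1)), q.1 + s • (q.2 - q.1) ∉ N)} = 0 := hGP
  have hexists : ∃ q : EuclideanSpace ℝ (Fin M) × EuclideanSpace ℝ (Fin M),
      q ∈ ball a r ×ˢ ball b r ∧
      (∀ᵐ s ∂(volume.restrict (Set.Icc (0:ℝ) 1)), q.1 + s • (q.2 - q.1) ∉ N) := by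
    by_contra h
    push_neg at h
    have hVsub : (ball a r ×ˢ ball b r : Set (EuclideanSpace ℝ (Fin M) × EuclideanSpace ℝ (Fin M)))
        ⊆ {q | ¬ (∀ᵐ s ∂(volume.restrict (Set.Icc (0:ℝ) 1)), q.1 + s • (q.2 - q.1) ∉ N)} :=
      fun q hq => h q hq
    exact absurd (le_antisymm (le_trans (measure_mono hVsub) (le_of_eq hbadnull)) zero_le)
      hVpos.ne'
  obtain ⟨q, hqV, hq⟩ := hexists
  have hq1 : q.1 ∈ ball a r := hqV.1
  have hq2 : q.2 ∈ ball b r := hqV.2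
  have hkey := key q.1 (hsub_a hq1) q.2 (hsub_b hq2) hq
  have e1 : |f q.1 - f a| < δ' := by
    have := hfa' (show dist q.1 a < r1 from lt_of_lt_of_le (mem_ball.1 hq1) hrr1)
    rwa [Real.dist_eq] at this
  have e2 : |f q.2 - f b| < δ' := by
    have := hfb' (show dist q.2 b < r2 from lt_of_lt_of_le (mem_ball.1 hq2) hrr2)
    rwa [Real.dist_eq] at this
  have hnorm : ‖q.2 - q.1‖ ≤ ‖b - a‖ + 2 * r := by
    have t1 : ‖q.2 - b‖ ≤ r := by
      have := mem_ball.1 hq2; rw [dist_eq_norm] at this; linarith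
    have t2 : ‖a - q.1‖ ≤ r := by
      have := mem_ball.1 hq1; rw [dist_eq_norm] at this
      rw [norm_sub_rev]; linarith
    calc ‖q.2 - q.1‖ = ‖(q.2 - b) + (b - a) + (a - q.1)‖ := by abel_nf
      _ ≤ ‖(q.2 - b) + (b - a)‖ + ‖a - q.1‖ := norm_add_le _ _
      _ ≤ ‖q.2 - b‖ + ‖b - a‖ + ‖a - q.1‖ := by
          have := norm_add_le (q.2 - b) (b - a); linarith
      _ ≤ ‖b - a‖ + 2 * r := by linarith
  have habs : |f b - f a| ≤ |f b - f q.2| + |f q.2 - f q.1| + |f q.1 - f a| := by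
    have t1 := abs_sub_le (f b) (f q.2) (f a)
    have t2 := abs_sub_le (f q.2) (f q.1) (f a)
    linarith
  have hterm1 : κ * |f b - f q.2| ≤ δ / 4 := by
    have : κ * |f b - f q.2| ≤ κ * δ' := by
      rw [abs_sub_comm]
      exact mul_le_mul_of_nonneg_left e2.le hκ
    exact le_trans this (hfrac κ δ hκ hδ)
  have hterm3 : κ * |f q.1 - f a| ≤ δ / 4 := by
    have : κ * |f q.1 - f a| ≤ κ * δ' := mul_le_mul_of_nonneg_left e1.le hκ
    exact le_trans this (hfrac κ δ hκ hδ)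
  have hterm2 : κ * |f q.2 - f q.1| ≤ C * ‖b - a‖ + δ / 2 := by
    have h2r : C * (2 * r) ≤ δ / 2 := by
      have : C * r ≤ δ / 4 :=
        le_trans (mul_le_mul_of_nonneg_left hrδ hC) (hfrac C δ hC hδ)
      linarith
    calc κ * |f q.2 - f q.1| ≤ C * ‖q.2 - q.1‖ := hkey
      _ ≤ C * (‖b - a‖ + 2 * r) := mul_le_mul_of_nonneg_left hnorm hC
      _ = C * ‖b - a‖ + C * (2 * r) := by ring
      _ ≤ C * ‖b - a‖ + δ / 2 := by linarith
  calc κ * |f b - f a| ≤ κ * (|f b - f q.2| + |f q.2 - f q.1| + |f q.1 - f a|) :=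
        mul_le_mul_of_nonneg_left habs hκ
    _ = κ * |f b - f q.2| + κ * |f q.2 - f q.1| + κ * |f q.1 - f a| := by ring
    _ ≤ C * ‖b - a‖ + δ := by linarith

end Aux

set_option maxHeartbeats 2000000 in
/-- The continuous α-entmax attention map `ρ(θ) = ∫ p_θ ψ dν` is differentiable at `θ₀`
and its Jacobian equals the generalized `(2−α)`-covariance
`cov_{p,2−α}(ψ, φ) = ∫_{p>0} p^(2−α) ψ φᵀ − (∫ p^(2−α) ψ)(∫ p^(2−α) φ)ᵀ / ∫ p^(2−α)`. -/
theorem stmt_7 {S : Type*} [MeasurableSpace S] (ν : Measure S)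
    (α : ℝ) (hα1 : 1 < α) (hα2 : α ≤ 2) (M N : ℕ)
    (φ : S → EuclideanSpace ℝ (Fin M)) (hφ : Measurable φ)
    (ψ : S → EuclideanSpace ℝ (Fin N)) (hψ : Measurable ψ)
    (U : Set (EuclideanSpace ℝ (Fin M))) (hU : IsOpen U)
    (A : EuclideanSpace ℝ (Fin M) → ℝ)
    (G : EuclideanSpace ℝ (Fin M) → EuclideanSpace ℝ (Fin M))
    (hA : ∀ θ ∈ U, HasGradientAt A (G θ) θ)
    (p : EuclideanSpace ℝ (Fin M) → S → ℝ)
    (hp : ∀ θ t, p θ t = max ((α - 1) * (⟪θ, φ t⟫ - A θ) + 1) 0 ^ (1 / (α - 1)))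
    (hp_one : ∀ θ ∈ U, ∫ t, p θ t ∂ν = 1)
    (gradp : EuclideanSpace ℝ (Fin M) → S → EuclideanSpace ℝ (Fin M))
    (hgradp : ∀ θ t, gradp θ t =
      if p θ t = 0 then 0 else (p θ t ^ (2 - α)) • (φ t - G θ))
    (hdiff : ∀ᵐ t ∂ν, ∀ θ ∈ U, HasGradientAt (fun θ' => p θ' t) (gradp θ t) θ)
    (θ₀ : EuclideanSpace ℝ (Fin M)) (hθ₀ : θ₀ ∈ U)
    (hdom : ∃ ε > 0, Metric.ball θ₀ ε ⊆ U ∧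
      ∃ g g' : S → ℝ, Integrable g ν ∧ Integrable g' ν ∧
        ∀ θ ∈ Metric.ball θ₀ ε, ∀ᵐ t ∂ν,
          ‖gradp θ t‖ ≤ g t ∧ ‖ψ t‖ * ‖gradp θ t‖ ≤ g' t)
    (hZ : IntegrableOn (fun t => p θ₀ t ^ (2 - α)) {t | 0 < p θ₀ t} ν)
    (hZpos : 0 < ∫ t in {t | 0 < p θ₀ t}, p θ₀ t ^ (2 - α) ∂ν)
    (hpψ : Integrable (fun t => p θ₀ t • ψ t) ν)
    (hψesc : IntegrableOn (fun t => (p θ₀ t ^ (2 - α)) • ψ t) {t | 0 < p θ₀ t} ν)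
    (hφesc : IntegrableOn (fun t => p θ₀ t ^ (2 - α) * ‖φ t‖) {t | 0 < p θ₀ t} ν)
    (hψφesc : IntegrableOn
      (fun t => p θ₀ t ^ (2 - α) * ‖ψ t‖ * ‖φ t‖) {t | 0 < p θ₀ t} ν)
    (ρ : EuclideanSpace ℝ (Fin M) → EuclideanSpace ℝ (Fin N))
    (hρ : ∀ θ, ρ θ = ∫ t, p θ t • ψ t ∂ν) :
    ∃ J : EuclideanSpace ℝ (Fin M) →L[ℝ] EuclideanSpace ℝ (Fin N),
      HasFDerivAt ρ J θ₀ ∧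
      ∀ v, J v =
        (∫ t in {t | 0 < p θ₀ t}, (p θ₀ t ^ (2 - α) * ⟪φ t, v⟫) • ψ t ∂ν) -
          ((∫ t in {t | 0 < p θ₀ t}, p θ₀ t ^ (2 - α) ∂ν)⁻¹ *
              ⟪∫ t in {t | 0 < p θ₀ t}, (p θ₀ t ^ (2 - α)) • φ t ∂ν, v⟫) •
            (∫ t in {t | 0 < p θ₀ t}, (p θ₀ t ^ (2 - α)) • ψ t ∂ν) := by
  classical
  obtain ⟨ε, hε, hballU, g, g', hg, hg', hbd⟩ := hdom
  have hθ₀ball : θ₀ ∈ Metric.ball θ₀ ε := Metric.mem_ball_self hε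
  -- basic facts about p
  have hexp : 0 < 1 / (α - 1) := by
    apply div_pos one_pos; linarith
  have hpnn : ∀ θ t, 0 ≤ p θ t := fun θ t => by
    rw [hp]; exact Real.rpow_nonneg (le_max_right _ _) _
  have hrnn : ∀ t, 0 ≤ p θ₀ t ^ (2 - α) := fun t => Real.rpow_nonneg (hpnn θ₀ t) _
  have hpm : ∀ θ, Measurable (fun t => p θ t) := by
    intro θ
    have heq : (fun t => p θ t)
        = fun t => max ((α - 1) * (⟪θ, φ t⟫ - A θ) + 1) 0 ^ (1 / (α - 1)) :=
      funext (hp θ)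
    rw [heq]
    have h1 : Measurable fun t => ⟪θ, φ t⟫ := Measurable.inner measurable_const hφ
    exact ((((h1.sub_const (A θ)).const_mul (α - 1)).add_const 1).max
      measurable_const).pow_const _
  have hpint : ∀ θ ∈ Metric.ball θ₀ ε, Integrable (fun t => p θ t) ν := by
    intro θ hθ
    by_contra h
    exact absurd ((hp_one θ (hballU hθ)).symm.trans (integral_undef h)) one_ne_zero
  have hpcont : ∀ t, ∀ θ ∈ U, ContinuousAt (fun θ' => p θ' t) θ := by
    intro t θ hθ
    have heq : (fun θ' => p θ' t)
        = fun θ' => max ((α - 1) * (⟪θ', φ t⟫ - A θ') + 1) 0 ^ (1 / (α - 1)) := by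
      funext θ'; exact hp θ' t
    rw [heq]
    have hAc : ContinuousAt A θ := (hA θ hθ).differentiableAt.continuousAt
    have hinner : ContinuousAt (fun θ' : EuclideanSpace ℝ (Fin M) => ⟪θ', φ t⟫) θ :=
      (continuous_id.inner continuous_const).continuousAt
    exact ((((hinner.sub hAc).const_mul (α - 1)).add continuousAt_const).max
      continuousAt_const).rpow_const (Or.inr hexp.le)
  -- measurable versions of the dominating functions
  set g₁ : S → ℝ := (hg.aestronglyMeasurable.mk g) with hg₁def
  have hg₁sm : StronglyMeasurable g₁ := hg.aestronglyMeasurable.stronglyMeasurable_mk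
  have hgg₁ : g =ᵐ[ν] g₁ := hg.aestronglyMeasurable.ae_eq_mk
  have hg₁ : Integrable g₁ ν := hg.congr hgg₁
  have hg₁m : Measurable g₁ := hg₁sm.measurable
  set g'₁ : S → ℝ := (hg'.aestronglyMeasurable.mk g') with hg'₁def
  have hg'₁sm : StronglyMeasurable g'₁ := hg'.aestronglyMeasurable.stronglyMeasurable_mk
  have hgg'₁ : g' =ᵐ[ν] g'₁ := hg'.aestronglyMeasurable.ae_eq_mk
  have hg'₁ : Integrable g'₁ ν := hg'.congr hgg'₁
  have hg'₁m : Measurable g'₁ := hg'₁sm.measurable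
  -- dense sequence in the ball
  set qq : ℕ → EuclideanSpace ℝ (Fin M) := fun n =>
    if TopologicalSpace.denseSeq (EuclideanSpace ℝ (Fin M)) n ∈ Metric.ball θ₀ ε
    then TopologicalSpace.denseSeq (EuclideanSpace ℝ (Fin M)) n else θ₀ with hqqdef
  have hqqball : ∀ n, qq n ∈ Metric.ball θ₀ ε := by
    intro n
    simp only [hqqdef]
    split
    · assumption
    · exact Metric.mem_ball_self hε
  have hqqdense : ∀ θ ∈ Metric.ball θ₀ ε, ∀ rr > 0, ∃ n, qq n ∈ Metric.ball θ rr := by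
    intro θ hθ rr hrr
    have hopen : IsOpen (Metric.ball θ rr ∩ Metric.ball θ₀ ε) :=
      Metric.isOpen_ball.inter Metric.isOpen_ball
    have hne : (Metric.ball θ rr ∩ Metric.ball θ₀ ε).Nonempty :=
      ⟨θ, Metric.mem_ball_self hrr, hθ⟩
    obtain ⟨n, hn⟩ := (TopologicalSpace.denseRange_denseSeq
      (EuclideanSpace ℝ (Fin M))).exists_mem_open hopen hne
    refine ⟨n, ?_⟩
    simp only [hqqdef]
    rw [if_pos hn.2]
    exact hn.1
  -- the sigma-finite core T
  set T : Set S := {t | g₁ t ≠ 0} ∪ {t | g'₁ t ≠ 0} ∪ {t | p θ₀ t ≠ 0}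
    ∪ ⋃ n, {t | p (qq n) t ≠ 0} with hTdef
  have hTm : MeasurableSet T := by
    refine MeasurableSet.union (MeasurableSet.union (MeasurableSet.union ?_ ?_) ?_) ?_
    · exact (hg₁m (measurableSet_singleton 0)).compl
    · exact (hg'₁m (measurableSet_singleton 0)).compl
    · exact ((hpm θ₀) (measurableSet_singleton 0)).compl
    · exact MeasurableSet.iUnion fun n => ((hpm (qq n)) (measurableSet_singleton 0)).compl
  have hvanish : ∀ θ ∈ Metric.ball θ₀ ε, ∀ t, t ∉ T → p θ t = 0 := by
    intro θ hθ t ht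
    by_contra hne
    have hpos : 0 < p θ t := (hpnn θ t).lt_of_ne (Ne.symm hne)
    have hev : ∀ᶠ θ' in nhds θ, 0 < p θ' t :=
      (hpcont t θ (hballU hθ)).eventually (eventually_gt_nhds hpos)
    obtain ⟨rr, hrr, hball⟩ := Metric.eventually_nhds_iff_ball.1 hev
    obtain ⟨n, hn⟩ := hqqdense θ hθ rr hrr
    have : 0 < p (qq n) t := hball _ hn
    apply ht
    rw [hTdef]
    exact Or.inr (Set.mem_iUnion.2 ⟨n, this.ne'⟩)
  haveI hσ : SigmaFinite (ν.restrict T) := by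
    set Fam : ℕ × ℕ → Set S := fun nm =>
      {t | 1 / (nm.1 + 1) ≤ |g₁ t|} ∪ {t | 1 / (nm.1 + 1) ≤ |g'₁ t|}
      ∪ {t | 1 / (nm.1 + 1) ≤ p θ₀ t} ∪ {t | 1 / (nm.1 + 1) ≤ p (qq nm.2) t} with hFamdef
    have hpos' : ∀ n : ℕ, (0:ℝ) < 1 / (n + 1) := fun n => by positivity
    have hfin : ∀ nm : ℕ × ℕ, ν (Fam nm) < ⊤ := by
      intro nm
      rw [hFamdef]
      refine lt_of_le_of_lt (measure_union_le _ _) ?_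
      rw [ENNReal.add_lt_top]
      constructor
      · refine lt_of_le_of_lt (measure_union_le _ _) ?_
        rw [ENNReal.add_lt_top]
        constructor
        · refine lt_of_le_of_lt (measure_union_le _ _) ?_
          rw [ENNReal.add_lt_top]
          exact ⟨hg₁.abs.measure_ge_lt_top (hpos' nm.1),
            hg'₁.abs.measure_ge_lt_top (hpos' nm.1)⟩
        · exact (hpint θ₀ hθ₀ball).measure_ge_lt_top (hpos' nm.1)
      · exact (hpint (qq nm.2) (hqqball nm.2)).measure_ge_lt_top (hpos' nm.1)
    refine Measure.sigmaFinite_of_countable ((Set.countable_range Fam).insert Tᶜ) ?_ ?_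
    · rintro s (rfl | ⟨nm, rfl⟩)
      · rw [Measure.restrict_apply hTm.compl]
        simp
      · exact lt_of_le_of_lt (Measure.le_iff'.1 Measure.restrict_le_self _) (hfin nm)
    · rw [Set.sUnion_insert]
      apply Set.eq_univ_of_forall
      intro t
      by_cases ht : t ∈ T
      · right
        rw [hTdef] at ht
        have hget : ∀ v : ℝ, 0 < v → ∃ n : ℕ, 1 / (n + 1 : ℝ) ≤ v := by
          intro v hv
          obtain ⟨n, hn⟩ := exists_nat_one_div_lt hv
          exact ⟨n, by exact_mod_cast hn.le⟩
        rw [Set.mem_sUnion]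
        rcases ht with ((h | h) | h) | h
        · obtain ⟨n, hn⟩ := hget _ (abs_pos.2 h)
          exact ⟨Fam (n, 0), Set.mem_range_self _, Or.inl (Or.inl (Or.inl hn))⟩
        · obtain ⟨n, hn⟩ := hget _ (abs_pos.2 h)
          exact ⟨Fam (n, 0), Set.mem_range_self _, Or.inl (Or.inl (Or.inr hn))⟩
        · obtain ⟨n, hn⟩ := hget _ ((hpnn θ₀ t).lt_of_ne (Ne.symm h))
          exact ⟨Fam (n, 0), Set.mem_range_self _, Or.inl (Or.inr hn)⟩
        · obtain ⟨m, hm⟩ := Set.mem_iUnion.1 h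
          obtain ⟨n, hn⟩ := hget _ ((hpnn (qq m) t).lt_of_ne (Ne.symm hm))
          exact ⟨Fam (n, m), Set.mem_range_self _, Or.inr hn⟩
      · exact Or.inl ht
  -- notation
  set Spos : Set S := {t | 0 < p θ₀ t} with hSposdef
  have hSposm : MeasurableSet Spos := measurableSet_lt measurable_const (hpm θ₀)
  have hSposT : Spos ⊆ T := fun t ht => Or.inl (Or.inr (ht : (0:ℝ) < p θ₀ t).ne')
  set ν' : Measure S := ν.restrict T with hν'def
  -- integrals over ν agree with integrals over ν' on the ball
  have hint_eqρ : ∀ θ ∈ Metric.ball θ₀ ε,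
      ∫ t, p θ t • ψ t ∂ν = ∫ t, p θ t • ψ t ∂ν' := by
    intro θ hθ
    have hind : (fun t => p θ t • ψ t) = T.indicator (fun t => p θ t • ψ t) := by
      symm
      rw [Set.indicator_eq_self]
      intro t ht
      by_contra htT
      exact ht (show p θ t • ψ t = 0 by rw [hvanish θ hθ t htT, zero_smul])
    conv_lhs => rw [hind]
    rw [integral_indicator hTm]
  have hint_one : ∀ θ ∈ Metric.ball θ₀ ε, ∫ t, p θ t ∂ν' = 1 := by
    intro θ hθ
    have hind : (fun t => p θ t) = T.indicator (fun t => p θ t) := by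
      symm
      rw [Set.indicator_eq_self]
      intro t ht
      by_contra htT
      exact ht (hvanish θ hθ t htT)
    rw [hν'def, ← integral_indicator hTm, ← hind, hp_one θ (hballU hθ)]
  -- measurable surrogates on the ball (for joint measurability)
  set μb : Measure (EuclideanSpace ℝ (Fin M)) := volume.restrict (Metric.ball θ₀ ε) with hμbdef
  have hAmd : AEMeasurable A μb := by
    have hAcont : ContinuousOn A U := fun θ hθ =>
      ((hA θ hθ).differentiableAt.continuousAt).continuousWithinAt
    exact (hAcont.aemeasurable hU.measurableSet).mono_measure
      (Measure.restrict_mono hballU le_rfl)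
  set A₁ := hAmd.mk A with hA₁def
  have hA₁m : Measurable A₁ := hAmd.measurable_mk
  have hAA₁ : A =ᵐ[μb] A₁ := hAmd.ae_eq_mk
  set G₁ : EuclideanSpace ℝ (Fin M) → EuclideanSpace ℝ (Fin M) :=
    fun θ => (InnerProductSpace.toDual ℝ (EuclideanSpace ℝ (Fin M))).symm (fderiv ℝ A θ)
    with hG₁def
  have hG₁m : Measurable G₁ :=
    ((InnerProductSpace.toDual ℝ (EuclideanSpace ℝ (Fin M))).symm.continuous.measurable).comp
      (measurable_fderiv ℝ A)
  have hGG₁ : ∀ θ ∈ U, G₁ θ = G θ := by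
    intro θ hθ
    have h1 : fderiv ℝ A θ = (InnerProductSpace.toDual ℝ (EuclideanSpace ℝ (Fin M))) (G θ) :=
      (hA θ hθ).hasFDerivAt.fderiv
    rw [hG₁def]
    simp only
    rw [h1]
    exact LinearIsometryEquiv.symm_apply_apply _ _
  set p₁ : (EuclideanSpace ℝ (Fin M)) × S → ℝ := fun x =>
    max ((α - 1) * (⟪x.1, φ x.2⟫ - A₁ x.1) + 1) 0 ^ (1 / (α - 1)) with hp₁def
  have hp₁m : Measurable p₁ := by
    have h1 : Measurable fun x : (EuclideanSpace ℝ (Fin M)) × S => ⟪x.1, φ x.2⟫ :=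
      Measurable.inner measurable_fst (hφ.comp measurable_snd)
    exact ((((h1.sub (hA₁m.comp measurable_fst)).const_mul (α - 1)).add_const 1).max
      measurable_const).pow_const _
  set q₁ : (EuclideanSpace ℝ (Fin M)) × S → ℝ := fun x =>
    if p₁ x = 0 then 0 else p₁ x ^ (2 - α) * ‖φ x.2 - G₁ x.1‖ with hq₁def
  have hq₁m : Measurable q₁ := by
    refine Measurable.ite (hp₁m (measurableSet_singleton 0)) measurable_const ?_
    exact (hp₁m.pow_const _).mul
      (((hφ.comp measurable_snd).sub (hG₁m.comp measurable_fst)).norm)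
  have hθrel : ∀ᵐ θ ∂μb, θ ∈ Metric.ball θ₀ ε ∧
      ∀ t, p₁ (θ, t) = p θ t ∧ q₁ (θ, t) = ‖gradp θ t‖ := by
    filter_upwards [hAA₁, ae_restrict_mem measurableSet_ball] with θ hA₁θ hθball
    refine ⟨hθball, fun t => ?_⟩
    have hpeq : p₁ (θ, t) = p θ t := by
      rw [hp₁def]
      simp only
      rw [← hA₁θ, ← hp]
    refine ⟨hpeq, ?_⟩
    rw [hq₁def]
    simp only [hpeq]
    rw [hgradp]
    by_cases h0 : p θ t = 0
    · rw [if_pos h0, if_pos h0, norm_zero]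
    · rw [if_neg h0, if_neg h0, norm_smul, Real.norm_eq_abs,
        abs_of_nonneg (Real.rpow_nonneg (hpnn θ t) _), hGG₁ θ (hballU hθball)]
  have hbd' : ∀ θ ∈ Metric.ball θ₀ ε, ∀ᵐ t ∂ν',
      ‖gradp θ t‖ ≤ |g₁ t| ∧ ‖ψ t‖ * ‖gradp θ t‖ ≤ |g'₁ t| := by
    intro θ hθ
    refine ae_restrict_of_ae ?_
    filter_upwards [hbd θ hθ, hgg₁, hgg'₁] with t h1 h2 h3
    exact ⟨le_trans h1.1 (by rw [h2]; exact le_abs_self _),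
      le_trans h1.2 (by rw [h3]; exact le_abs_self _)⟩
  -- Fubini swap
  have hswap_in : ∀ᵐ θ ∂μb, ∀ᵐ t ∂ν',
      q₁ (θ, t) ≤ |g₁ t| ∧ ‖ψ t‖ * q₁ (θ, t) ≤ |g'₁ t| := by
    filter_upwards [hθrel] with θ hθ
    filter_upwards [hbd' θ hθ.1] with t ht
    rw [(hθ.2 t).2]
    exact ht
  have hPm : MeasurableSet {x : (EuclideanSpace ℝ (Fin M)) × S |
      q₁ (x.1, x.2) ≤ |g₁ x.2| ∧ ‖ψ x.2‖ * q₁ (x.1, x.2) ≤ |g'₁ x.2|} := by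
    refine MeasurableSet.inter ?_ ?_
    · exact measurableSet_le hq₁m ((hg₁m.comp measurable_snd).abs)
    · exact measurableSet_le ((hψ.comp measurable_snd).norm.mul hq₁m)
        ((hg'₁m.comp measurable_snd).abs)
  have hswap_out : ∀ᵐ t ∂ν', ∀ᵐ θ ∂μb,
      q₁ (θ, t) ≤ |g₁ t| ∧ ‖ψ t‖ * q₁ (θ, t) ≤ |g'₁ t| :=
    (Measure.ae_ae_comm hPm).1 hswap_in
  -- a.e. Lipschitz estimates
  have hdiff' : ∀ᵐ t ∂ν', ∀ θ ∈ U, HasGradientAt (fun θ' => p θ' t) (gradp θ t) θ :=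
    ae_restrict_of_ae hdiff
  have hlip : ∀ᵐ t ∂ν',
      ∀ a ∈ Metric.ball θ₀ ε, ∀ b ∈ Metric.ball θ₀ ε,
        |p b t - p a t| ≤ |g₁ t| * ‖b - a‖ ∧
        ‖ψ t‖ * |p b t - p a t| ≤ |g'₁ t| * ‖b - a‖ := by
    filter_upwards [hswap_out, hdiff'] with t ht hdt
    have hbnd : ∀ᵐ θ ∂μb, ‖gradp θ t‖ ≤ |g₁ t| ∧ ‖ψ t‖ * ‖gradp θ t‖ ≤ |g'₁ t| := by
      filter_upwards [ht, hθrel] with θ h1 h2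
      rw [← (h2.2 t).2]
      exact h1
    have hgradball : ∀ θ' ∈ Metric.ball θ₀ ε,
        HasGradientAt (fun θ'' => p θ'' t) (gradp θ' t) θ' :=
      fun θ' hθ' => hdt θ' (hballU hθ')
    have L1 := lipschitz_of_ae_grad_bound (κ := 1) zero_le_one (abs_nonneg (g₁ t)) hgradball
      (by filter_upwards [hbnd] with θ h; rw [one_mul]; exact h.1)
    have L2 := lipschitz_of_ae_grad_bound (κ := ‖ψ t‖) (norm_nonneg _) (abs_nonneg (g'₁ t))
      hgradball (by filter_upwards [hbnd] with θ h; exact h.2)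
    intro a ha b hb
    constructor
    · have := L1 a ha b hb
      rwa [one_mul] at this
    · exact L2 a ha b hb
  -- measurability of gradp θ₀
  have hgpm : Measurable (fun t => gradp θ₀ t) := by
    have heq : (fun t => gradp θ₀ t) = fun t =>
        if p θ₀ t = 0 then 0 else (p θ₀ t ^ (2 - α)) • (φ t - G θ₀) := funext (hgradp θ₀)
    rw [heq]
    refine Measurable.ite ((hpm θ₀) (measurableSet_singleton 0)) measurable_const ?_
    exact ((hpm θ₀).pow_const _).smul (hφ.sub measurable_const)
  -- first application of differentiation under the integral: the normalization
  set F1' : S → (EuclideanSpace ℝ (Fin M)) →L[ℝ] ℝ := fun t =>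
    (InnerProductSpace.toDual ℝ (EuclideanSpace ℝ (Fin M))) (gradp θ₀ t) with hF1'def
  have happ1 := hasFDerivAt_integral_of_dominated_loc_of_lip (𝕜 := ℝ) (μ := ν')
      (F := fun θ t => p θ t) (F' := F1') (x₀ := θ₀) (bound := g₁) (s := Metric.ball θ₀ ε) (Metric.ball_mem_nhds θ₀ hε)
      (Filter.Eventually.of_forall fun θ => (hpm θ).aestronglyMeasurable)
      ((hpint θ₀ hθ₀ball).restrict)
      ((InnerProductSpace.toDual ℝ
        (EuclideanSpace ℝ (Fin M))).continuous.comp_aestronglyMeasurable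
        hgpm.aestronglyMeasurable)
      ?_ (hg₁.restrict) ?_
  rotate_left
  · filter_upwards [hlip] with t ht
    rw [lipschitzOnWith_iff_dist_le_mul]
    intro x hx y hy
    rw [Real.dist_eq, Real.coe_nnabs, dist_eq_norm]
    exact (ht y hy x hx).1
  · filter_upwards [hdiff'] with t ht
    exact (ht θ₀ hθ₀).hasFDerivAt
  obtain ⟨hF1'int, hD1⟩ := happ1
  have hconst : (fun θ => ∫ t, p θ t ∂ν') =ᶠ[nhds θ₀] fun _ => (1:ℝ) := by
    filter_upwards [Metric.ball_mem_nhds θ₀ hε] with θ hθ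
    exact hint_one θ hθ
  have hL0 : (∫ t, F1' t ∂ν') = 0 := by
    have h1 : HasFDerivAt (fun _ : EuclideanSpace ℝ (Fin M) => (1:ℝ)) (∫ t, F1' t ∂ν') θ₀ :=
      hD1.congr_of_eventuallyEq hconst.symm
    exact h1.unique (hasFDerivAt_const 1 θ₀)
  have hgradp0 : (∫ t, gradp θ₀ t ∂ν') = 0 := by
    apply (InnerProductSpace.toDual ℝ (EuclideanSpace ℝ (Fin M))).injective
    have h2 : (∫ t, F1' t ∂ν')
        = (InnerProductSpace.toDual ℝ (EuclideanSpace ℝ (Fin M))) (∫ t, gradp θ₀ t ∂ν') := by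
      rw [hF1'def]
      have := (InnerProductSpace.toDual ℝ
        (EuclideanSpace ℝ (Fin M))).toLinearIsometry.integral_comp_comm
        (μ := ν') (fun t => gradp θ₀ t)
      exact this
    rw [← h2, hL0, map_zero]
  -- identify the gradient of A at θ₀
  have hν'res : ν'.restrict Spos = ν.restrict Spos := by
    rw [hν'def, Measure.restrict_restrict hSposm, Set.inter_eq_self_of_subset_left hSposT]
  have hindicator : (fun t => gradp θ₀ t)
      = Spos.indicator (fun t => (p θ₀ t ^ (2 - α)) • (φ t - G θ₀)) := by
    funext t
    by_cases h0 : p θ₀ t = 0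
    · have hnm : t ∉ Spos := by simp [hSposdef, h0]
      rw [hgradp, if_pos h0, Set.indicator_of_notMem hnm]
    · have hm : t ∈ Spos := by
        simp only [hSposdef, Set.mem_setOf_eq]
        exact (hpnn θ₀ t).lt_of_ne (Ne.symm h0)
      rw [hgradp, if_neg h0, Set.indicator_of_mem hm]
  have hIφint : Integrable (fun t => (p θ₀ t ^ (2 - α)) • φ t) (ν.restrict Spos) := by
    refine Integrable.mono' hφesc (((hpm θ₀).pow_const _).smul hφ).aestronglyMeasurable ?_
    refine ae_of_all _ fun t => ?_
    rw [norm_smul, Real.norm_eq_abs, abs_of_nonneg (hrnn t)]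
  have hconstsmul : Integrable (fun t => (p θ₀ t ^ (2 - α)) • (G θ₀)) (ν.restrict Spos) :=
    hZ.smul_const (G θ₀)
  have hsplit : (∫ t, gradp θ₀ t ∂ν')
      = (∫ t in Spos, (p θ₀ t ^ (2 - α)) • φ t ∂ν)
        - (∫ t in Spos, p θ₀ t ^ (2 - α) ∂ν) • (G θ₀) := by
    rw [hindicator, integral_indicator hSposm, hν'res]
    simp_rw [smul_sub]
    rw [integral_sub hIφint hconstsmul, integral_smul_const]
  have hGform : G θ₀ = (∫ t in Spos, p θ₀ t ^ (2 - α) ∂ν)⁻¹ •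
      (∫ t in Spos, (p θ₀ t ^ (2 - α)) • φ t ∂ν) := by
    have h3 : (∫ t in Spos, (p θ₀ t ^ (2 - α)) • φ t ∂ν)
        = (∫ t in Spos, p θ₀ t ^ (2 - α) ∂ν) • (G θ₀) := by
      have h4 := hgradp0
      rw [hsplit] at h4
      exact (sub_eq_zero.1 h4)
    rw [h3, smul_smul, inv_mul_cancel₀ hZpos.ne', one_smul]
  -- second application: the attention map itself
  set F2' : S → (EuclideanSpace ℝ (Fin M)) →L[ℝ] (EuclideanSpace ℝ (Fin N)) := fun t =>
    ((InnerProductSpace.toDual ℝ (EuclideanSpace ℝ (Fin M))) (gradp θ₀ t)).smulRight (ψ t)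
    with hF2'def
  have hF2'meas : AEStronglyMeasurable F2' ν' := by
    have hcont : Continuous fun y : ((EuclideanSpace ℝ (Fin M)) →L[ℝ] ℝ) ×
        (EuclideanSpace ℝ (Fin N)) => y.1.smulRight y.2 :=
      isBoundedBilinearMap_smulRight.continuous
    have hpair : AEStronglyMeasurable (fun t =>
        (((InnerProductSpace.toDual ℝ (EuclideanSpace ℝ (Fin M))) (gradp θ₀ t)),
          ψ t)) ν' := by
      refine AEStronglyMeasurable.prodMk ?_ hψ.aestronglyMeasurable
      exact (InnerProductSpace.toDual ℝ
        (EuclideanSpace ℝ (Fin M))).continuous.comp_aestronglyMeasurable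
        hgpm.aestronglyMeasurable
    exact hcont.comp_aestronglyMeasurable hpair
  have happ2 := hasFDerivAt_integral_of_dominated_loc_of_lip (𝕜 := ℝ) (μ := ν')
      (F := fun θ t => p θ t • ψ t) (F' := F2') (x₀ := θ₀) (bound := g'₁) (s := Metric.ball θ₀ ε) (Metric.ball_mem_nhds θ₀ hε)
      (Filter.Eventually.of_forall fun θ => ((hpm θ).smul hψ).aestronglyMeasurable)
      (hpψ.restrict) hF2'meas ?_ (hg'₁.restrict) ?_
  rotate_left
  · filter_upwards [hlip] with t ht
    rw [lipschitzOnWith_iff_dist_le_mul]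
    intro x hx y hy
    rw [Real.coe_nnabs, dist_eq_norm, dist_eq_norm, ← sub_smul, norm_smul, Real.norm_eq_abs]
    calc |p x t - p y t| * ‖ψ t‖ = ‖ψ t‖ * |p x t - p y t| := mul_comm _ _
      _ ≤ |g'₁ t| * ‖x - y‖ := (ht y hy x hx).2
  · filter_upwards [hdiff'] with t ht
    exact ((ht θ₀ hθ₀).hasFDerivAt).smul_const (ψ t)
  obtain ⟨hF2'int, hD2⟩ := happ2
  refine ⟨∫ t, F2' t ∂ν', ?_, ?_⟩
  · -- ρ agrees with the ν' integral near θ₀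
    have hρeq : ρ =ᶠ[nhds θ₀] fun θ => ∫ t, p θ t • ψ t ∂ν' := by
      filter_upwards [Metric.ball_mem_nhds θ₀ hε] with θ hθ
      rw [hρ θ, hint_eqρ θ hθ]
    exact hD2.congr_of_eventuallyEq hρeq
  · intro v
    rw [ContinuousLinearMap.integral_apply hF2'int]
    have happly : ∀ t, (F2' t) v = Spos.indicator (fun t =>
        (p θ₀ t ^ (2 - α) * ⟪φ t, v⟫) • ψ t
          - ⟪G θ₀, v⟫ • ((p θ₀ t ^ (2 - α)) • ψ t)) t := by
      intro t
      rw [hF2'def]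
      simp only [ContinuousLinearMap.smulRight_apply, InnerProductSpace.toDual_apply_apply]
      by_cases h0 : p θ₀ t = 0
      · have hnm : t ∉ Spos := by simp [hSposdef, h0]
        rw [hgradp, if_pos h0, Set.indicator_of_notMem hnm]
        simp
      · have hm : t ∈ Spos := by
          simp only [hSposdef, Set.mem_setOf_eq]
          exact (hpnn θ₀ t).lt_of_ne (Ne.symm h0)
        rw [hgradp, if_neg h0, Set.indicator_of_mem hm,
          real_inner_smul_left, inner_sub_left, smul_smul, ← sub_smul]
        congr 1
        ring
    have hI1 : Integrable (fun t => (p θ₀ t ^ (2 - α) * ⟪φ t, v⟫) • ψ t) (ν.restrict Spos) := by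
      refine Integrable.mono' (hψφesc.mul_const ‖v‖)
        ((((hpm θ₀).pow_const _).mul (Measurable.inner hφ measurable_const)).smul
          hψ).aestronglyMeasurable ?_
      refine ae_of_all _ fun t => ?_
      rw [norm_smul, Real.norm_eq_abs, abs_mul, abs_of_nonneg (hrnn t)]
      calc p θ₀ t ^ (2 - α) * |⟪φ t, v⟫| * ‖ψ t‖
          ≤ p θ₀ t ^ (2 - α) * (‖φ t‖ * ‖v‖) * ‖ψ t‖ :=
            mul_le_mul_of_nonneg_right
              (mul_le_mul_of_nonneg_left (abs_real_inner_le_norm (φ t) v) (hrnn t))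
              (norm_nonneg _)
        _ = p θ₀ t ^ (2 - α) * ‖ψ t‖ * ‖φ t‖ * ‖v‖ := by ring
    have hI2 : Integrable (fun t => ⟪G θ₀, v⟫ • ((p θ₀ t ^ (2 - α)) • ψ t))
        (ν.restrict Spos) := hψesc.smul ⟪G θ₀, v⟫
    calc ∫ t, (F2' t) v ∂ν'
        = ∫ t, Spos.indicator (fun t =>
            (p θ₀ t ^ (2 - α) * ⟪φ t, v⟫) • ψ t
              - ⟪G θ₀, v⟫ • ((p θ₀ t ^ (2 - α)) • ψ t)) t ∂ν' :=
          integral_congr_ae (ae_of_all _ happly)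
      _ = ∫ t in Spos, ((p θ₀ t ^ (2 - α) * ⟪φ t, v⟫) • ψ t
              - ⟪G θ₀, v⟫ • ((p θ₀ t ^ (2 - α)) • ψ t)) ∂ν' := integral_indicator hSposm
      _ = ∫ t in Spos, ((p θ₀ t ^ (2 - α) * ⟪φ t, v⟫) • ψ t
              - ⟪G θ₀, v⟫ • ((p θ₀ t ^ (2 - α)) • ψ t)) ∂ν := by rw [hν'res]
      _ = (∫ t in Spos, (p θ₀ t ^ (2 - α) * ⟪φ t, v⟫) • ψ t ∂ν)
            - ∫ t in Spos, ⟪G θ₀, v⟫ • ((p θ₀ t ^ (2 - α)) • ψ t) ∂ν :=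
          integral_sub hI1 hI2
      _ = (∫ t in Spos, (p θ₀ t ^ (2 - α) * ⟪φ t, v⟫) • ψ t ∂ν)
            - ⟪G θ₀, v⟫ • (∫ t in Spos, (p θ₀ t ^ (2 - α)) • ψ t ∂ν) := by
          rw [integral_smul]
      _ = (∫ t in Spos, (p θ₀ t ^ (2 - α) * ⟪φ t, v⟫) • ψ t ∂ν)
            - ((∫ t in Spos, p θ₀ t ^ (2 - α) ∂ν)⁻¹ *
                ⟪∫ t in Spos, (p θ₀ t ^ (2 - α)) • φ t ∂ν, v⟫) •
              (∫ t in Spos, (p θ₀ t ^ (2 - α)) • ψ t ∂ν) := by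
          rw [hGform, real_inner_smul_left]
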